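/- Suppose (aₙ) is a complex sequence with ∑ |aₙ| n^{-c} < ∞ for some c > 0. Then for every y > 0, ∑_{n=1}^∞ aₙ e^{-ny} = (1/(2πi)) ∫_{c - i∞}^{c + i∞} Γ(s) A(s) y^{-s} ds, where A(s) = ∑ₙ aₙ n^{-s} (Mellin inversion for Lambert/exponential series). -/

import Mathlib

open Complex MeasureTheory


lemma aux_norm_Gamma_le {z : ℂ} (hz : 0 < z.re) : ‖Complex.Gamma z‖ ≤ Real.Gamma z.re := by
  rw [Complex.Gamma_eq_integral hz, Complex.GammaIntegral, Real.Gamma_eq_integral hz]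
  refine (norm_integral_le_integral_norm _).trans_eq ?_
  refine setIntegral_congr_fun measurableSet_Ioi fun x hx => ?_
  rw [norm_mul, Complex.norm_real, Real.norm_eq_abs,
    _root_.abs_of_nonneg (Real.exp_pos _).le, Complex.norm_cpow_eq_rpow_re_of_pos hx, Complex.sub_re,
    Complex.one_re]

lemma aux_cont {c : ℝ} (hc : 0 < c) : Continuous fun t : ℝ => Complex.Gamma (c + t * I) := by
  rw [continuous_iff_continuousAt]
  intro t
  refine ContinuousAt.comp ?_ (by fun_prop)
  refine (Complex.differentiableAt_Gamma _ fun m => ?_).continuousAt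
  intro h
  have : c = -(m : ℝ) := by simpa using congrArg Complex.re h
  have := Nat.cast_nonneg (α := ℝ) m
  linarith

lemma aux_gamma_vint {c : ℝ} (hc : 0 < c) :
    Integrable (fun t : ℝ => Complex.Gamma (c + t * I)) := by
  have hint : Integrable (fun t : ℝ => Real.Gamma (c + 2) / (c ^ 2 + t ^ 2)) := by
    have h1 : Integrable (fun t : ℝ => (1 + (t / c) ^ 2)⁻¹) :=
      integrable_inv_one_add_sq.comp_div hc.ne'
    have := (h1.const_mul (Real.Gamma (c + 2) / c ^ 2))
    refine this.congr (Filter.Eventually.of_forall fun t => ?_)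
    field_simp
  refine hint.mono' (aux_cont hc).aestronglyMeasurable (Filter.Eventually.of_forall fun t => ?_)
  set s : ℂ := (c : ℂ) + t * I with hs
  have hsre : s.re = c := by simp [hs]
  have hsim : s.im = t := by simp [hs]
  have hs0 : s ≠ 0 := fun h => by rw [h] at hsre; simp at hsre; linarith
  have hs1 : s + 1 ≠ 0 := fun h => by
    have : (s + 1).re = 0 := by rw [h]; simp
    rw [Complex.add_re, hsre, Complex.one_re] at this; linarith
  have key : Complex.Gamma s = Complex.Gamma (s + 2) / (s * (s + 1)) := by
    have h1 : Complex.Gamma (s + 1) = s * Complex.Gamma s := Complex.Gamma_add_one s hs0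
    have h2 : Complex.Gamma (s + 1 + 1) = (s + 1) * Complex.Gamma (s + 1) :=
      Complex.Gamma_add_one (s + 1) hs1
    have : s + 1 + 1 = s + 2 := by ring
    rw [this] at h2
    rw [h2, h1]
    field_simp
  rw [key, norm_div, norm_mul]
  have hb1 : ‖Complex.Gamma (s + 2)‖ ≤ Real.Gamma (c + 2) := by
    have : (s + 2).re = c + 2 := by rw [Complex.add_re, hsre]; norm_num
    have h := aux_norm_Gamma_le (z := s + 2) (by rw [this]; linarith)
    rwa [this] at h
  have habs : ‖s‖ = Real.sqrt (c ^ 2 + t ^ 2) := by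
    rw [Complex.norm_def, Complex.normSq_apply, hsre, hsim]
    ring_nf
  have habs1 : Real.sqrt (c ^ 2 + t ^ 2) ≤ ‖s + 1‖ := by
    rw [Complex.norm_def, Complex.normSq_apply, Complex.add_re,
      Complex.add_im, hsre, hsim, Complex.one_re, Complex.one_im]
    apply Real.sqrt_le_sqrt
    nlinarith
  have hpos : (0:ℝ) < c ^ 2 + t ^ 2 := by positivity
  have hlow : c ^ 2 + t ^ 2 ≤ ‖s‖ * ‖s + 1‖ := by
    calc c ^ 2 + t ^ 2 = Real.sqrt (c ^ 2 + t ^ 2) * Real.sqrt (c ^ 2 + t ^ 2) :=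
          (Real.mul_self_sqrt hpos.le).symm
      _ ≤ ‖s‖ * ‖s + 1‖ := by rw [habs]; exact mul_le_mul_of_nonneg_left habs1 (Real.sqrt_nonneg _)
  exact div_le_div₀ (Real.Gamma_pos_of_pos (by linarith)).le hb1 hpos hlow

lemma aux_mellin_exp {c : ℝ} (hc : 0 < c) {x : ℝ} (hx : 0 < x) :
    ((1 / (2 * Real.pi) : ℝ) : ℂ) *
      ∫ t : ℝ, Complex.Gamma (c + t * I) * (x : ℂ) ^ (-((c : ℂ) + t * I)) =
      Complex.exp (-x) := by
  set f : ℝ → ℂ := fun u => ((Real.exp (-u) : ℝ) : ℂ) with hfdef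
  have hmf : ∀ s : ℂ, mellin f s = Complex.GammaIntegral s := fun s => by
    rw [Complex.GammaIntegral_eq_mellin]
  have hmg : ∀ t : ℝ, mellin f ((c : ℂ) + t * I) = Complex.Gamma ((c : ℂ) + t * I) := fun t => by
    rw [hmf, ← Complex.Gamma_eq_integral (by simp [hc])]
  have hf : MellinConvergent f c := by
    have h := Complex.GammaIntegral_convergent (s := (c : ℂ)) (by simpa using hc)
    refine h.congr_fun (fun t ht => ?_) measurableSet_Ioi
    simp [hfdef, smul_eq_mul, mul_comm]
  have hFf : VerticalIntegrable (mellin f) c := by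
    refine (aux_gamma_vint hc).congr (Filter.Eventually.of_forall fun t => ?_)
    exact (hmg t).symm
  have hfx : ContinuousAt f x := by fun_prop
  have key := mellinInv_mellin_eq c f hx hf hFf hfx
  rw [mellinInv] at key
  have : (∫ t : ℝ, ((x : ℂ) ^ (-((c : ℂ) + t * I))) • mellin f ((c : ℂ) + t * I)) =
      ∫ t : ℝ, Complex.Gamma (c + t * I) * (x : ℂ) ^ (-((c : ℂ) + t * I)) := by
    congr 1
    funext t
    rw [hmg t, smul_eq_mul, mul_comm]
  rw [this] at key
  rw [Complex.real_smul] at key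
  rw [key, hfdef]
  simp only [Complex.ofReal_exp, Complex.ofReal_neg]

lemma aux_contF (a : ℕ → ℂ) {c : ℝ} (hc : 0 < c) {y : ℝ} (hy : 0 < y) (n : ℕ) :
    Continuous (fun t : ℝ =>
      Complex.Gamma (c + t * I) * (a (n + 1) / ((n + 1 : ℕ) : ℂ) ^ ((c : ℂ) + t * I)) *
        (y : ℂ) ^ (-((c : ℂ) + t * I))) := by
  have hb : (((n + 1 : ℕ) : ℂ)) ≠ 0 := Nat.cast_ne_zero.mpr (Nat.succ_ne_zero n)
  have hs : Continuous fun t : ℝ => (c : ℂ) + t * I := by fun_prop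
  have h1 : Continuous fun t : ℝ => (((n + 1 : ℕ) : ℂ)) ^ ((c : ℂ) + t * I) :=
    hs.const_cpow (Or.inl hb)
  have h2 : Continuous fun t : ℝ => (y : ℂ) ^ (-((c : ℂ) + t * I)) :=
    hs.neg.const_cpow (Or.inl (ofReal_ne_zero.mpr hy.ne'))
  have h3 : ∀ t : ℝ, (((n + 1 : ℕ) : ℂ)) ^ ((c : ℂ) + t * I) ≠ 0 := fun t => by
    simp only [ne_eq, Complex.cpow_eq_zero_iff, not_and_or, not_not]
    exact Or.inl hb
  exact ((aux_cont hc).mul (continuous_const.div h1 h3)).mul h2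

lemma aux_normF (a : ℕ → ℂ) {c : ℝ} {y : ℝ} (hy : 0 < y) (n : ℕ) (t : ℝ) :
    ‖Complex.Gamma (c + t * I) * (a (n + 1) / ((n + 1 : ℕ) : ℂ) ^ ((c : ℂ) + t * I)) *
        (y : ℂ) ^ (-((c : ℂ) + t * I))‖ =
      ‖Complex.Gamma ((c : ℂ) + t * I)‖ * (‖a (n + 1)‖ / ((n + 1 : ℝ)) ^ c * y ^ (-c)) := by
  have hre : ((c : ℂ) + t * I).re = c := by simp
  have hb : ‖(((n + 1 : ℕ) : ℂ)) ^ ((c : ℂ) + t * I)‖ = ((n + 1 : ℝ)) ^ c := by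
    have h : (((n + 1 : ℕ) : ℂ)) = ((((n + 1 : ℕ) : ℝ)) : ℂ) := by push_cast; ring
    rw [h, Complex.norm_cpow_eq_rpow_re_of_pos (by positivity), hre]
    norm_num
  have hy' : ‖(y : ℂ) ^ (-((c : ℂ) + t * I))‖ = y ^ (-c) := by
    rw [Complex.norm_cpow_eq_rpow_re_of_pos hy]
    simp
  simp only [norm_mul, norm_div, hb, hy']
  ring

/-- Mellin inversion for Lambert/exponential series: for y > 0,
∑ aₙ e^{-ny} = (1/2πi) ∫_(c) Γ(s) A(s) y^{-s} ds, the line integral written as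
(1/2π) ∫_ℝ Γ(c+it) A(c+it) y^{-(c+it)} dt. -/
theorem stmt_11 (a : ℕ → ℂ) (c : ℝ) (hc : 0 < c)
    (ha : Summable (fun n : ℕ => ‖a (n + 1)‖ / ((n + 1 : ℝ)) ^ c))
    (y : ℝ) (hy : 0 < y) :
    ∑' n : ℕ, a (n + 1) * Complex.exp (-((n + 1 : ℕ) : ℂ) * y) =
      (1 / (2 * Real.pi)) *
        ∫ t : ℝ, Complex.Gamma (c + t * I) *
          (∑' n : ℕ, a (n + 1) / ((n + 1 : ℕ) : ℂ) ^ ((c : ℂ) + t * I)) *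
          (y : ℂ) ^ (-((c : ℂ) + t * I)) := by
  have hΓ := aux_gamma_vint hc
  let F : ℕ → ℝ → ℂ := fun n t =>
    Complex.Gamma (c + t * I) * (a (n + 1) / ((n + 1 : ℕ) : ℂ) ^ ((c : ℂ) + t * I)) *
      (y : ℂ) ^ (-((c : ℂ) + t * I))
  have hIntF : ∀ n : ℕ, Integrable (F n) := fun n =>
    (hΓ.norm.mul_const (‖a (n + 1)‖ / ((n + 1 : ℝ)) ^ c * y ^ (-c))).mono'
      (aux_contF a hc hy n).aestronglyMeasurable
      (Filter.Eventually.of_forall fun t => le_of_eq (aux_normF a hy n t))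
  have hSum : Summable fun n : ℕ => ∫ t : ℝ, ‖F n t‖ := by
    have heq : ∀ n : ℕ, (∫ t : ℝ, ‖F n t‖) =
        (∫ t : ℝ, ‖Complex.Gamma ((c : ℂ) + t * I)‖) *
          (‖a (n + 1)‖ / ((n + 1 : ℝ)) ^ c * y ^ (-c)) := fun n => by
      rw [← integral_mul_const]
      exact integral_congr_ae (Filter.Eventually.of_forall fun t => aux_normF a hy n t)
    simp_rw [heq]
    refine Summable.mul_left _ ?_
    simpa [mul_assoc] using ha.mul_right (y ^ (-c))
  have hswap := integral_tsum_of_summable_integral_norm hIntF hSum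
  have hint_eq : (∫ t : ℝ, Complex.Gamma (c + t * I) *
      (∑' n : ℕ, a (n + 1) / ((n + 1 : ℕ) : ℂ) ^ ((c : ℂ) + t * I)) *
      (y : ℂ) ^ (-((c : ℂ) + t * I))) = ∫ t : ℝ, ∑' n : ℕ, F n t := by
    congr 1
    funext t
    rw [← tsum_mul_left, ← tsum_mul_right]
  rw [hint_eq, ← hswap, ← tsum_mul_left]
  congr 1
  funext n
  have hxpos : (0 : ℝ) < ((n + 1 : ℕ) : ℝ) * y := by positivity
  have hFeq : ∀ t : ℝ, F n t = a (n + 1) *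
      (Complex.Gamma (c + t * I) * ((((n + 1 : ℕ) : ℝ) * y : ℝ) : ℂ) ^ (-((c : ℂ) + t * I))) := by
    intro t
    show Complex.Gamma (c + t * I) * (a (n + 1) / ((n + 1 : ℕ) : ℂ) ^ ((c : ℂ) + t * I)) *
      (y : ℂ) ^ (-((c : ℂ) + t * I)) = _
    rw [Complex.ofReal_mul,
      mul_cpow_ofReal_nonneg (by positivity) hy.le, div_eq_mul_inv, ← Complex.cpow_neg]
    push_cast
    ring
  have : (∫ t : ℝ, F n t) = a (n + 1) * ∫ t : ℝ,
      Complex.Gamma (c + t * I) * ((((n + 1 : ℕ) : ℝ) * y : ℝ) : ℂ) ^ (-((c : ℂ) + t * I)) := by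
    rw [← integral_const_mul]
    exact integral_congr_ae (Filter.Eventually.of_forall hFeq)
  rw [this, mul_left_comm,
    show (1 / (2 * (Real.pi : ℂ))) = ((1 / (2 * Real.pi) : ℝ) : ℂ) from by push_cast; ring,
    aux_mellin_exp hc hxpos]
  congr 1
  push_cast
  ring_nf
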